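/- For every positive integer d there is a constant C > 0, depending only on d, with the following property. Let φ be a 3SAT instance with n variables and m clauses such that every clause contains exactly 3 distinct variables and every variable occurs in exactly d clauses (so 3m = dn), and let Z := {(i,j) ∈ [m]×[n] : variable x_j occurs in clause C_i}. Fix integers 1 ≤ k ≤ m and 1 ≤ ℓ ≤ n. Let U be the uniform distribution over pairs (I,J) of a k-element subset I ⊆ [m] and an ℓ-element subset J ⊆ [n], and let D be the distribution obtained by choosing (i,j) uniformly from Z, then I uniformly among k-subsets of [m] containing i and, independently, J uniformly among ℓ-subsets of [n] containing j. Then the total variation distance satisfies ‖D − U‖ ≤ C·√(n/(kℓ)). -/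

import Mathlib

open Finset

/-- A 3SAT clause over `n` variables: three distinct variable indices together with
three negation signs.  The `t`-th literal is satisfied by an assignment `x` iff
`x (var t) ≠ neg t`. -/
structure Clause3 (n : ℕ) where
  var : Fin 3 → Fin n
  neg : Fin 3 → Bool
  inj : Function.Injective var

/-- The clause is satisfied by the (global) assignment `x`. -/
def Clause3.satBy {n : ℕ} (C : Clause3 n) (x : Fin n → Bool) : Prop :=
  ∃ t : Fin 3, x (C.var t) ≠ C.neg t

/-- The clause is satisfied by a local assignment `α` to its three variables
(indexed by position). -/
def Clause3.satLocal {n : ℕ} (C : Clause3 n) (α : Fin 3 → Bool) : Prop :=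
  ∃ t : Fin 3, α t ≠ C.neg t

instance {n : ℕ} (C : Clause3 n) (x : Fin n → Bool) : Decidable (C.satBy x) := by
  unfold Clause3.satBy; infer_instance

instance {n : ℕ} (C : Clause3 n) (α : Fin 3 → Bool) : Decidable (C.satLocal α) := by
  unfold Clause3.satLocal; infer_instance

/-- `Z`: the set of (clause index, variable index) incidence pairs of `φ`. -/
def Zset {n m : ℕ} (φ : Fin m → Clause3 n) : Finset (Fin m × Fin n) :=
  univ.filter fun p => ∃ t : Fin 3, (φ p.1).var t = p.2

/-- The value of the clause/variable game `G_φ`. -/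
noncomputable def cvVal {n m : ℕ} (φ : Fin m → Clause3 n) : ℝ :=
  ⨆ a : Fin m → Fin 3 → Bool, ⨆ b : Fin n → Bool,
    (∑ i : Fin m, ∑ t : Fin 3,
        if (φ i).satLocal (a i) ∧ a i t = b ((φ i).var t) then (1 : ℝ) else 0) /
      (3 * (m : ℝ))

/-- The winning predicate of the birthday repetition game `G_φ^{k×ℓ}`:
for all `i ∈ I` and `j ∈ J` such that variable `j` occurs in clause `i`,
Merlin₁'s assignment to clause `i` satisfies it and agrees with Merlin₂'s
bit for variable `j`. -/
def bdWin {n m : ℕ} (φ : Fin m → Clause3 n) (I : Finset (Fin m)) (J : Finset (Fin n))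
    (a : Fin m → Fin 3 → Bool) (b : Fin n → Bool) : Prop :=
  ∀ i ∈ I, ∀ j ∈ J, ∀ t : Fin 3, (φ i).var t = j →
    ((φ i).satLocal (a i) ∧ a i t = b j)

instance {n m : ℕ} (φ : Fin m → Clause3 n) (I : Finset (Fin m)) (J : Finset (Fin n))
    (a : Fin m → Fin 3 → Bool) (b : Fin n → Bool) : Decidable (bdWin φ I J a b) := by
  unfold bdWin; infer_instance

/-- The value of the birthday repetition game `G_φ^{k×ℓ}`: Arthur sends a uniformly
random `k`-subset `I` of clause indices to Merlin₁ and, independently, a uniformly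
random `ℓ`-subset `J` of variable indices to Merlin₂; their (deterministic)
strategies answer with assignments to the clauses in `I`, resp. bits for the
variables in `J`. -/
noncomputable def bdVal {n m : ℕ} (φ : Fin m → Clause3 n) (k ℓ : ℕ) : ℝ :=
  ⨆ a : Finset (Fin m) → Fin m → Fin 3 → Bool, ⨆ b : Finset (Fin n) → Fin n → Bool,
    (∑ I ∈ (univ : Finset (Fin m)).powersetCard k,
        ∑ J ∈ (univ : Finset (Fin n)).powersetCard ℓ,
          if bdWin φ I J (a I) (b J) then (1 : ℝ) else 0) /
      ((((univ : Finset (Fin m)).powersetCard k).card : ℝ) *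
        (((univ : Finset (Fin n)).powersetCard ℓ).card : ℝ))

/-- The probability that the pair `(I, J)` is produced by the correlated
distribution `D`: choose `(i,j)` uniformly from `Z`, then `I` uniformly among
`k`-subsets of `[m]` containing `i` and, independently, `J` uniformly among
`ℓ`-subsets of `[n]` containing `j`. -/
noncomputable def prD {n m : ℕ} (φ : Fin m → Clause3 n) (k ℓ : ℕ)
    (I : Finset (Fin m)) (J : Finset (Fin n)) : ℝ :=
  (∑ p ∈ Zset φ,
      if p.1 ∈ I ∧ p.2 ∈ J then
        (1 : ℝ) /
          ((((((univ : Finset (Fin m)).powersetCard k).filter fun I' => p.1 ∈ I').card : ℝ)) *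
            (((((univ : Finset (Fin n)).powersetCard ℓ).filter fun J' => p.2 ∈ J').card : ℝ)))
      else 0) / ((Zset φ).card : ℝ)

/-- The probability that the pair `(I, J)` is produced by the uniform
distribution `U` on pairs of a `k`-subset of `[m]` and an `ℓ`-subset of `[n]`. -/
noncomputable def prU (m n k ℓ : ℕ) : ℝ :=
  1 / ((((univ : Finset (Fin m)).powersetCard k).card : ℝ) *
    (((univ : Finset (Fin n)).powersetCard ℓ).card : ℝ))


section AuxTV

lemma aux_card1 {α : Type*} [DecidableEq α] (s : Finset α) (a : α) (ha : a ∈ s) (r : ℕ) :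
    ((s.powersetCard (r+1)).filter fun t => a ∈ t).card = (s.card - 1).choose r := by
  rw [← card_erase_of_mem ha, ← card_powersetCard]
  apply card_bij' (fun t _ => t.erase a) (fun u _ => insert a u)
  · intro t ht
    simp only [mem_filter] at ht
    exact insert_erase ht.2
  · intro u hu
    simp only [mem_powersetCard] at hu
    exact erase_insert fun h => (notMem_erase a s) (hu.1 h)
  · intro t ht
    simp only [mem_filter, mem_powersetCard] at ht
    simp only [mem_powersetCard]
    exact ⟨erase_subset_erase _ ht.1.1, by rw [card_erase_of_mem ht.2, ht.1.2]; rfl⟩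
  · intro u hu
    simp only [mem_powersetCard] at hu
    have hau : a ∉ u := fun h => (notMem_erase a s) (hu.1 h)
    simp only [mem_filter, mem_powersetCard]
    exact ⟨⟨insert_subset ha (hu.1.trans (erase_subset _ _)),
      by rw [card_insert_of_notMem hau, hu.2]⟩, mem_insert_self _ _⟩

lemma aux_card2 {α : Type*} [DecidableEq α] (s : Finset α) (a b : α) (ha : a ∈ s) (hb : b ∈ s)
    (hab : a ≠ b) (r : ℕ) :
    ((s.powersetCard (r+2)).filter fun t => a ∈ t ∧ b ∈ t).card = (s.card - 2).choose r := by
  have hb' : b ∈ s.erase a := mem_erase.2 ⟨hab.symm, hb⟩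
  have h2 : (s.erase a).card - 1 = s.card - 2 := by
    rw [card_erase_of_mem ha]; omega
  rw [← h2, ← aux_card1 (s.erase a) b hb' r]
  apply card_bij' (fun t _ => t.erase a) (fun u _ => insert a u)
  · intro t ht
    simp only [mem_filter] at ht
    exact insert_erase ht.2.1
  · intro u hu
    simp only [mem_filter, mem_powersetCard] at hu
    exact erase_insert fun h => (notMem_erase a s) (hu.1.1 h)
  · intro t ht
    simp only [mem_filter, mem_powersetCard] at ht
    simp only [mem_filter, mem_powersetCard]
    refine ⟨⟨erase_subset_erase _ ht.1.1, ?_⟩, mem_erase.2 ⟨fun h => hab h.symm, ht.2.2⟩⟩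
    rw [card_erase_of_mem ht.2.1, ht.1.2]
    rfl
  · intro u hu
    simp only [mem_filter, mem_powersetCard] at hu
    have hau : a ∉ u := fun h => (notMem_erase a s) (hu.1.1 h)
    simp only [mem_filter, mem_powersetCard]
    refine ⟨⟨insert_subset ha (hu.1.1.trans (erase_subset _ _)), ?_⟩,
      mem_insert_self _ _, mem_insert_of_mem hu.2⟩
    rw [card_insert_of_notMem hau, hu.1.2]

lemma aux_choose (C K : ℕ) (h : K ≤ C) :
    C.choose K * (C+2).choose (K+2) ≤ ((C+1).choose (K+1))^2 := by
  have h1 := Nat.add_one_mul_choose_eq C K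
  have h2 := Nat.add_one_mul_choose_eq (C+1) (K+1)
  apply Nat.le_of_mul_le_mul_right _ (show 0 < (C+1)*(K+2) by positivity)
  calc C.choose K * (C+2).choose (K+2) * ((C+1)*(K+2))
      = ((C+1) * C.choose K) * ((C+2).choose (K+2)*(K+2)) := by ring
    _ = ((C+1).choose (K+1)*(K+1)) * ((C+2)*(C+1).choose (K+1)) := by
        rw [h1, ← h2]
    _ = ((C+1).choose (K+1))^2 * ((K+1)*(C+2)) := by ring
    _ ≤ ((C+1).choose (K+1))^2 * ((C+1)*(K+2)) := by
        apply Nat.mul_le_mul_left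
        nlinarith

lemma aux_card2_le {α : Type*} [DecidableEq α] [Fintype α] (a b : α) (hab : a ≠ b)
    (kk : ℕ) (hk : 1 ≤ kk) (hkc : kk ≤ Fintype.card α) :
    (((univ : Finset α).powersetCard kk).filter fun t => a ∈ t ∧ b ∈ t).card
      * (Fintype.card α).choose kk ≤ ((Fintype.card α - 1).choose (kk-1))^2 := by
  rcases Nat.lt_or_ge kk 2 with h2 | h2
  · have hkk : kk = 1 := by omega
    subst hkk
    have : (((univ : Finset α).powersetCard 1).filter fun t => a ∈ t ∧ b ∈ t) = ∅ := by
      rw [filter_eq_empty_iff]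
      intro t ht
      simp only [mem_powersetCard] at ht
      rintro ⟨hat, hbt⟩
      exact hab ((card_le_one.1 ht.2.le) a hat b hbt)
    simp [this]
  · obtain ⟨K, rfl⟩ : ∃ K, kk = K + 2 := ⟨kk - 2, by omega⟩
    obtain ⟨Cc, hC⟩ : ∃ Cc, Fintype.card α = Cc + 2 := ⟨Fintype.card α - 2, by omega⟩
    have := aux_card2 (univ : Finset α) a b (mem_univ a) (mem_univ b) hab K
    rw [card_univ, hC] at this
    rw [this, hC]
    simp only [Nat.add_sub_cancel]
    exact aux_choose Cc K (by omega)

lemma aux_num (dd kk ll mm nn : ℝ) (hd : 1 ≤ dd) (hk1 : 1 ≤ kk) (hl1 : 1 ≤ ll)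
    (hkm : kk ≤ mm) (hln : ll ≤ nn) :
    mm*nn + 3*(mm*ll) + dd*(kk*nn) ≤ 12*(dd+2)^2*(mm*nn) := by
  nlinarith [mul_nonneg (by linarith : (0:ℝ) ≤ mm) (by linarith : (0:ℝ) ≤ nn-ll),
    mul_nonneg (mul_nonneg (by linarith : (0:ℝ) ≤ dd) (by linarith : (0:ℝ) ≤ nn))
      (by linarith : (0:ℝ) ≤ mm-kk),
    mul_nonneg (mul_nonneg (by linarith : (0:ℝ) ≤ mm) (by linarith : (0:ℝ) ≤ nn))
      (by nlinarith : (0:ℝ) ≤ 12*(dd+2)^2 - (dd+4))]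

lemma sum_swap3 {ι₁ ι₂ ι₃ : Type*} (s : Finset ι₁) (t : Finset ι₂) (u : Finset ι₃)
    (f : ι₁ → ι₂ → ι₃ → ℝ) :
    ∑ a ∈ s, ∑ b ∈ t, ∑ c ∈ u, f a b c = ∑ c ∈ u, ∑ a ∈ s, ∑ b ∈ t, f a b c := by
  rw [show (∑ a ∈ s, ∑ b ∈ t, ∑ c ∈ u, f a b c) = ∑ a ∈ s, ∑ c ∈ u, ∑ b ∈ t, f a b c from
    Finset.sum_congr rfl fun a _ => Finset.sum_comm]
  exact Finset.sum_comm

lemma sum_swap4 {ι₁ ι₂ ι₃ ι₄ : Type*} (s : Finset ι₁) (t : Finset ι₂) (u : Finset ι₃)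
    (v : Finset ι₄) (f : ι₁ → ι₂ → ι₃ → ι₄ → ℝ) :
    ∑ a ∈ s, ∑ b ∈ t, ∑ c ∈ u, ∑ d ∈ v, f a b c d
      = ∑ c ∈ u, ∑ d ∈ v, ∑ a ∈ s, ∑ b ∈ t, f a b c d := by
  rw [show (∑ a ∈ s, ∑ b ∈ t, ∑ c ∈ u, ∑ d ∈ v, f a b c d)
      = ∑ c ∈ u, ∑ a ∈ s, ∑ b ∈ t, ∑ d ∈ v, f a b c d from
    sum_swap3 s t u fun a b c => ∑ d ∈ v, f a b c d]
  exact Finset.sum_congr rfl fun c _ => sum_swap3 s t v fun a b d => f a b c d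

end AuxTV

set_option maxHeartbeats 2000000 in
/-- For every degree `d` there is a constant `C > 0`, depending only on `d`, such
that for every balanced 3SAT instance (each clause with 3 distinct variables,
each variable in exactly `d` clauses) and all `1 ≤ k ≤ m`, `1 ≤ ℓ ≤ n`, the total
variation distance between the correlated distribution `D` and the uniform
distribution `U` on pairs `(I, J)` is at most `C·√(n/(kℓ))`. -/
theorem tv_dist_D_U_bound :
    ∀ d : ℕ, 0 < d → ∃ C : ℝ, 0 < C ∧
      ∀ (n m : ℕ) (φ : Fin m → Clause3 n),
        (∀ j : Fin n, (univ.filter fun i => ∃ t : Fin 3, (φ i).var t = j).card = d) →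
        ∀ k ℓ : ℕ, 1 ≤ k → k ≤ m → 1 ≤ ℓ → ℓ ≤ n →
          (1 / 2 : ℝ) *
              ∑ I ∈ (univ : Finset (Fin m)).powersetCard k,
                ∑ J ∈ (univ : Finset (Fin n)).powersetCard ℓ,
                  |prD φ k ℓ I J - prU m n k ℓ|
            ≤ C * Real.sqrt ((n : ℝ) / ((k : ℝ) * ℓ)) := by
  intro d hd
  refine ⟨(d : ℝ) + 2, by positivity, ?_⟩
  intro n m φ hdeg k ℓ hk hkm hℓ hℓn
  have hn : 1 ≤ n := hℓ.trans hℓn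
  have hm : 1 ≤ m := hk.trans hkm
  -- real abbreviations
  set a : ℝ := (m.choose k : ℝ) with hadef
  set b : ℝ := (n.choose ℓ : ℝ) with hbdef
  set a' : ℝ := ((m-1).choose (k-1) : ℝ) with ha'def
  set b' : ℝ := ((n-1).choose (ℓ-1) : ℝ) with hb'def
  set z : ℝ := ((Zset φ).card : ℝ) with hzdef
  clear_value a b a' b' z
  have hapos : 0 < a := by
    rw [hadef]; exact_mod_cast Nat.choose_pos hkm
  have hbpos : 0 < b := by
    rw [hbdef]; exact_mod_cast Nat.choose_pos hℓn
  have ha'pos : 0 < a' := by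
    rw [ha'def]; exact_mod_cast Nat.choose_pos (by omega)
  have hb'pos : 0 < b' := by
    rw [hb'def]; exact_mod_cast Nat.choose_pos (by omega)
  -- counting: one-element filters
  have hA1 : ∀ i : Fin m,
      ((((univ : Finset (Fin m)).powersetCard k).filter fun I => i ∈ I).card : ℝ) = a' := by
    intro i
    have e2 : k - 1 + 1 = k := by omega
    have h := aux_card1 (univ : Finset (Fin m)) i (mem_univ i) (k-1)
    rw [e2, card_univ, Fintype.card_fin] at h
    rw [h, ha'def]
  have hB1 : ∀ j : Fin n,
      ((((univ : Finset (Fin n)).powersetCard ℓ).filter fun J => j ∈ J).card : ℝ) = b' := by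
    intro j
    have e2 : ℓ - 1 + 1 = ℓ := by omega
    have h := aux_card1 (univ : Finset (Fin n)) j (mem_univ j) (ℓ-1)
    rw [e2, card_univ, Fintype.card_fin] at h
    rw [h, hb'def]
  -- Z cardinality
  have hmemZ : ∀ p : Fin m × Fin n, p ∈ Zset φ ↔ ∃ t : Fin 3, (φ p.1).var t = p.2 := by
    intro p; simp [Zset]
  have hZ3 : (Zset φ).card = 3 * m := by
    unfold Zset
    rw [card_filter, Fintype.sum_prod_type]
    have : ∀ i : Fin m,
        (∑ j : Fin n, if ∃ t : Fin 3, (φ i).var t = j then 1 else 0) = 3 := by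
      intro i
      rw [← card_filter]
      have : ((univ : Finset (Fin n)).filter fun j => ∃ t : Fin 3, (φ i).var t = j)
          = (univ : Finset (Fin 3)).image (φ i).var := by
        ext j; simp [eq_comm]
      rw [this, card_image_of_injective _ (φ i).inj, card_univ, Fintype.card_fin]
    rw [sum_congr rfl fun i _ => this i]
    simp [mul_comm]
  have hZd : (Zset φ).card = d * n := by
    unfold Zset
    rw [card_filter, Fintype.sum_prod_type, Finset.sum_comm]
    have : ∀ j : Fin n,
        (∑ i : Fin m, if ∃ t : Fin 3, (φ i).var t = j then 1 else 0) = d := by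
      intro j
      rw [← card_filter]
      exact hdeg j
    rw [sum_congr rfl fun j _ => this j]
    simp [mul_comm]
  have hzpos : 0 < z := by
    rw [hzdef, hZ3]
    have h0 : 0 < 3*m := by omega
    exact_mod_cast h0
  have hz3 : z = 3 * m := by rw [hzdef, hZ3]; push_cast; ring
  have hzd : z = (d : ℝ) * n := by rw [hzdef, hZd]; push_cast; ring
  -- binomial identities
  have h1 : (m : ℝ) * a' = (k : ℝ) * a := by
    have e1 : m - 1 + 1 = m := by omega
    have e2 : k - 1 + 1 = k := by omega
    have h := Nat.add_one_mul_choose_eq (m-1) (k-1)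
    simp only [Nat.succ_eq_add_one, e1, e2] at h
    rw [ha'def, hadef]
    exact_mod_cast h.trans (Nat.mul_comm _ _)
  have h2 : (n : ℝ) * b' = (ℓ : ℝ) * b := by
    have e1 : n - 1 + 1 = n := by omega
    have e2 : ℓ - 1 + 1 = ℓ := by omega
    have h := Nat.add_one_mul_choose_eq (n-1) (ℓ-1)
    simp only [Nat.succ_eq_add_one, e1, e2] at h
    rw [hb'def, hbdef]
    exact_mod_cast h.trans (Nat.mul_comm _ _)
  -- X and μ
  set X : Finset (Fin m) → Finset (Fin n) → ℝ :=
    fun I J => ∑ p ∈ Zset φ, if p.1 ∈ I ∧ p.2 ∈ J then (1:ℝ) else 0 with hXdef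
  set μ : ℝ := z * a' * b' / (a * b) with hμdef
  clear_value X μ
  have ha0 : a ≠ 0 := hapos.ne'
  have hb0 : b ≠ 0 := hbpos.ne'
  have ha'0 : a' ≠ 0 := ha'pos.ne'
  have hb'0 : b' ≠ 0 := hb'pos.ne'
  have hz0 : z ≠ 0 := hzpos.ne'
  -- rewriting prD and prU
  have hprU : prU m n k ℓ = 1 / (a * b) := by
    unfold prU
    rw [card_powersetCard, card_powersetCard, card_univ, card_univ, Fintype.card_fin,
      Fintype.card_fin, hadef, hbdef]
  have hprD : ∀ I J, prD φ k ℓ I J = X I J / (a' * b' * z) := by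
    intro I J
    unfold prD
    have step : ∀ p ∈ Zset φ,
        (if p.1 ∈ I ∧ p.2 ∈ J then
          (1:ℝ) / ((((((univ : Finset (Fin m)).powersetCard k).filter
                fun I' => p.1 ∈ I').card : ℝ)) *
            (((((univ : Finset (Fin n)).powersetCard ℓ).filter
                fun J' => p.2 ∈ J').card : ℝ)))
        else 0)
        = (if p.1 ∈ I ∧ p.2 ∈ J then (1:ℝ) else 0) * (1/(a'*b')) := by
      intro p _
      rw [hA1 p.1, hB1 p.2]
      split_ifs <;> ring
    rw [sum_congr rfl step, ← sum_mul, ← hzdef]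
    simp only [hXdef]
    rw [mul_one_div, div_div]
  -- absolute value of the difference
  have hcpos : 0 < a' * b' * z := mul_pos (mul_pos ha'pos hb'pos) hzpos
  have habs : ∀ I J, |prD φ k ℓ I J - prU m n k ℓ| = |X I J - μ| / (a' * b' * z) := by
    intro I J
    rw [hprD I J, hprU]
    have e : X I J / (a' * b' * z) - 1 / (a * b) = (X I J - μ) / (a' * b' * z) := by
      rw [hμdef]
      field_simp
    rw [e, abs_div, abs_of_pos hcpos]
  set S : ℝ := ∑ I ∈ (univ : Finset (Fin m)).powersetCard k,
      ∑ J ∈ (univ : Finset (Fin n)).powersetCard ℓ, |X I J - μ| with hSdef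
  clear_value S
  have hgoal : (1 / 2 : ℝ) *
      (∑ I ∈ (univ : Finset (Fin m)).powersetCard k,
        ∑ J ∈ (univ : Finset (Fin n)).powersetCard ℓ,
          |prD φ k ℓ I J - prU m n k ℓ|)
      = 1/2 * (S / (a' * b' * z)) := by
    rw [hSdef, sum_div]
    congr 1
    refine sum_congr rfl fun I _ => ?_
    rw [sum_div]
    exact sum_congr rfl fun J _ => habs I J
  rw [hgoal]
  -- Cauchy-Schwarz
  have hcards : (((univ : Finset (Fin m)).powersetCard k).card : ℝ) = a := by
    rw [card_powersetCard, card_univ, Fintype.card_fin, hadef]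
  have hcards' : (((univ : Finset (Fin n)).powersetCard ℓ).card : ℝ) = b := by
    rw [card_powersetCard, card_univ, Fintype.card_fin, hbdef]
  have hCS : S^2 ≤ (a*b) * (∑ I ∈ (univ : Finset (Fin m)).powersetCard k,
      ∑ J ∈ (univ : Finset (Fin n)).powersetCard ℓ, (X I J - μ)^2) := by
    have h := sum_mul_sq_le_sq_mul_sq
      (((univ : Finset (Fin m)).powersetCard k) ×ˢ ((univ : Finset (Fin n)).powersetCard ℓ))
      (fun _ => (1:ℝ)) (fun IJ => |X IJ.1 IJ.2 - μ|)
    simp only [one_mul, one_pow, sum_const, nsmul_eq_mul, mul_one, sq_abs] at h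
    have e1 : ∑ IJ ∈ (((univ : Finset (Fin m)).powersetCard k) ×ˢ
        ((univ : Finset (Fin n)).powersetCard ℓ)), |X IJ.1 IJ.2 - μ| = S := by
      rw [hSdef, Finset.sum_product]
    have e2 : ∑ IJ ∈ (((univ : Finset (Fin m)).powersetCard k) ×ˢ
        ((univ : Finset (Fin n)).powersetCard ℓ)), (X IJ.1 IJ.2 - μ)^2
        = ∑ I ∈ (univ : Finset (Fin m)).powersetCard k,
            ∑ J ∈ (univ : Finset (Fin n)).powersetCard ℓ, (X I J - μ)^2 := by
      rw [Finset.sum_product]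
    have e3 : ((((univ : Finset (Fin m)).powersetCard k) ×ˢ
        ((univ : Finset (Fin n)).powersetCard ℓ)).card : ℝ) = a * b := by
      rw [card_product]
      push_cast
      rw [← hcards, ← hcards']
    rw [e1, e2] at h
    calc S^2 ≤ ((((univ : Finset (Fin m)).powersetCard k) ×ˢ
        ((univ : Finset (Fin n)).powersetCard ℓ)).card : ℝ) *
          (∑ I ∈ (univ : Finset (Fin m)).powersetCard k,
            ∑ J ∈ (univ : Finset (Fin n)).powersetCard ℓ, (X I J - μ)^2) := h
      _ = _ := by rw [e3]
  -- Fubini: sum of X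
  have hfact : ∀ (I : Finset (Fin m)) (J : Finset (Fin n)) (p : Fin m × Fin n),
      (if p.1 ∈ I ∧ p.2 ∈ J then (1:ℝ) else 0)
        = (if p.1 ∈ I then (1:ℝ) else 0) * (if p.2 ∈ J then (1:ℝ) else 0) := by
    intro I J p
    by_cases h1 : p.1 ∈ I <;> by_cases h2 : p.2 ∈ J <;> simp [h1, h2]
  have hS1 : ∑ I ∈ (univ : Finset (Fin m)).powersetCard k,
      ∑ J ∈ (univ : Finset (Fin n)).powersetCard ℓ, X I J = z * (a' * b') := by
    simp only [hXdef]
    rw [sum_swap3 ((univ : Finset (Fin m)).powersetCard k)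
      ((univ : Finset (Fin n)).powersetCard ℓ) (Zset φ)
      (fun I J p => if p.1 ∈ I ∧ p.2 ∈ J then (1:ℝ) else 0)]
    have inner : ∀ p ∈ Zset φ,
        (∑ I ∈ (univ : Finset (Fin m)).powersetCard k,
          ∑ J ∈ (univ : Finset (Fin n)).powersetCard ℓ,
            if p.1 ∈ I ∧ p.2 ∈ J then (1:ℝ) else 0) = a' * b' := by
      intro p _
      have : ∀ I : Finset (Fin m), (∑ J ∈ (univ : Finset (Fin n)).powersetCard ℓ,
          if p.1 ∈ I ∧ p.2 ∈ J then (1:ℝ) else 0)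
          = (if p.1 ∈ I then (1:ℝ) else 0) * b' := by
        intro I
        rw [sum_congr rfl fun J _ => hfact I J p, ← mul_sum, Finset.sum_boole, hB1 p.2]
      rw [sum_congr rfl fun I _ => this I, ← sum_mul, Finset.sum_boole, hA1 p.1]
    rw [sum_congr rfl inner, sum_const, nsmul_eq_mul, hzdef]
  -- two-element counts
  set cA2 : Fin m → Fin m → ℝ := fun i i' =>
    ((((univ : Finset (Fin m)).powersetCard k).filter fun I => i ∈ I ∧ i' ∈ I).card : ℝ)
    with hcA2def
  set cB2 : Fin n → Fin n → ℝ := fun j j' =>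
    ((((univ : Finset (Fin n)).powersetCard ℓ).filter fun J => j ∈ J ∧ j' ∈ J).card : ℝ)
    with hcB2def
  clear_value cA2 cB2
  have hcA2nonneg : ∀ i i', 0 ≤ cA2 i i' := fun i i' => by
    simp only [hcA2def]; exact Nat.cast_nonneg _
  have hcB2nonneg : ∀ j j', 0 ≤ cB2 j j' := fun j j' => by
    simp only [hcB2def]; exact Nat.cast_nonneg _
  have hA2le : ∀ i i', cA2 i i' ≤ a' := by
    intro i i'
    rw [← hA1 i]
    simp only [hcA2def]
    exact Nat.cast_le.2 (card_le_card (monotone_filter_right _ fun I _ h => h.1))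
  have hB2le : ∀ j j', cB2 j j' ≤ b' := by
    intro j j'
    rw [← hB1 j]
    simp only [hcB2def]
    exact Nat.cast_le.2 (card_le_card (monotone_filter_right _ fun J _ h => h.1))
  have hA2mul : ∀ i i', i ≠ i' → cA2 i i' * a ≤ a'^2 := by
    intro i i' hne
    have h := aux_card2_le i i' hne k hk (by rwa [Fintype.card_fin])
    rw [Fintype.card_fin] at h
    simp only [hcA2def, hadef, ha'def]
    exact_mod_cast h
  have hB2mul : ∀ j j', j ≠ j' → cB2 j j' * b ≤ b'^2 := by
    intro j j' hne
    have h := aux_card2_le j j' hne ℓ hℓ (by rwa [Fintype.card_fin])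
    rw [Fintype.card_fin] at h
    simp only [hcB2def, hbdef, hb'def]
    exact_mod_cast h
  -- sum of X^2
  have hS2 : ∑ I ∈ (univ : Finset (Fin m)).powersetCard k,
      ∑ J ∈ (univ : Finset (Fin n)).powersetCard ℓ, (X I J)^2
      = ∑ p ∈ Zset φ, ∑ q ∈ Zset φ, cA2 p.1 q.1 * cB2 p.2 q.2 := by
    have expand : ∀ I J, (X I J)^2 = ∑ p ∈ Zset φ, ∑ q ∈ Zset φ,
        (if p.1 ∈ I ∧ q.1 ∈ I then (1:ℝ) else 0) * (if p.2 ∈ J ∧ q.2 ∈ J then (1:ℝ) else 0) := by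
      intro I J
      simp only [hXdef]
      rw [sq, Finset.sum_mul_sum]
      refine sum_congr rfl fun p _ => sum_congr rfl fun q _ => ?_
      by_cases h1 : p.1 ∈ I <;> by_cases h2 : p.2 ∈ J <;>
        by_cases h3 : q.1 ∈ I <;> by_cases h4 : q.2 ∈ J <;> simp [h1, h2, h3, h4]
    rw [sum_congr rfl fun I _ => sum_congr rfl fun J _ => expand I J]
    rw [sum_swap4 ((univ : Finset (Fin m)).powersetCard k)
      ((univ : Finset (Fin n)).powersetCard ℓ) (Zset φ) (Zset φ)
      (fun I J p q => (if p.1 ∈ I ∧ q.1 ∈ I then (1:ℝ) else 0) *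
        (if p.2 ∈ J ∧ q.2 ∈ J then (1:ℝ) else 0))]
    refine sum_congr rfl fun p _ => sum_congr rfl fun q _ => ?_
    have : ∀ I : Finset (Fin m), (∑ J ∈ (univ : Finset (Fin n)).powersetCard ℓ,
        (if p.1 ∈ I ∧ q.1 ∈ I then (1:ℝ) else 0) * (if p.2 ∈ J ∧ q.2 ∈ J then (1:ℝ) else 0))
        = (if p.1 ∈ I ∧ q.1 ∈ I then (1:ℝ) else 0) * cB2 p.2 q.2 := by
      intro I
      rw [← mul_sum, Finset.sum_boole, hcB2def]
    rw [sum_congr rfl fun I _ => this I, ← sum_mul, Finset.sum_boole, hcA2def]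
  -- variance identity
  have hμab : μ * (a*b) = z * a' * b' := by
    rw [hμdef]; field_simp
  have hvar : ∑ I ∈ (univ : Finset (Fin m)).powersetCard k,
      ∑ J ∈ (univ : Finset (Fin n)).powersetCard ℓ, (X I J - μ)^2
      = ∑ p ∈ Zset φ, ∑ q ∈ Zset φ,
          (cA2 p.1 q.1 * cB2 p.2 q.2 - (a'*b')^2/(a*b)) := by
    have inner_eq : ∀ I : Finset (Fin m),
        (∑ J ∈ (univ : Finset (Fin n)).powersetCard ℓ, (X I J - μ)^2)
        = (∑ J ∈ (univ : Finset (Fin n)).powersetCard ℓ, (X I J)^2)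
          - 2*μ*(∑ J ∈ (univ : Finset (Fin n)).powersetCard ℓ, X I J) + b*μ^2 := by
      intro I
      rw [sum_congr rfl fun J _ =>
        (by ring : (X I J - μ)^2 = ((X I J)^2 - 2*μ*(X I J)) + μ^2)]
      rw [sum_add_distrib, sum_sub_distrib, ← mul_sum, sum_const, nsmul_eq_mul, hcards']
    have lhs_eq : (∑ I ∈ (univ : Finset (Fin m)).powersetCard k,
        ∑ J ∈ (univ : Finset (Fin n)).powersetCard ℓ, (X I J - μ)^2)
        = (∑ I ∈ (univ : Finset (Fin m)).powersetCard k,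
            ∑ J ∈ (univ : Finset (Fin n)).powersetCard ℓ, (X I J)^2)
          - 2*μ*(z*(a'*b')) + (a*b)*μ^2 := by
      rw [sum_congr rfl fun I _ => inner_eq I, sum_add_distrib, sum_sub_distrib,
        ← mul_sum, sum_const, nsmul_eq_mul, hcards, hS1]
      ring
    have rhs_eq : (∑ p ∈ Zset φ, ∑ q ∈ Zset φ,
          (cA2 p.1 q.1 * cB2 p.2 q.2 - (a'*b')^2/(a*b)))
        = (∑ p ∈ Zset φ, ∑ q ∈ Zset φ, cA2 p.1 q.1 * cB2 p.2 q.2)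
          - z*(z*((a'*b')^2/(a*b))) := by
      rw [sum_congr rfl fun p _ => sum_sub_distrib _ _, sum_sub_distrib]
      congr 1
      rw [sum_congr rfl fun p (_ : p ∈ Zset φ) =>
        (by rw [sum_const, nsmul_eq_mul, hzdef] :
          (∑ _q ∈ Zset φ, (a'*b')^2/(a*b)) = z*((a'*b')^2/(a*b)))]
      rw [sum_const, nsmul_eq_mul, hzdef]
    rw [lhs_eq, rhs_eq, hS2, hμdef]
    field_simp
    ring
  -- counting bounds
  have hcount1 : ∀ p : Fin m × Fin n, ((Zset φ).filter fun q => p.1 = q.1).card ≤ 3 := by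
    intro p
    have hsub : ((Zset φ).filter fun q => p.1 = q.1).card ≤
        ((univ : Finset (Fin 3)).image (φ p.1).var).card := by
      apply card_le_card_of_injOn (fun q => q.2)
      · intro q hq
        rw [mem_coe, mem_filter] at hq
        obtain ⟨t, ht⟩ := (hmemZ q).1 hq.1
        rw [mem_coe, mem_image]
        exact ⟨t, mem_univ t, by rw [hq.2]; exact ht⟩
      · intro q1 h1 q2 h2 he
        simp only [coe_filter, Set.mem_setOf_eq] at h1 h2
        exact Prod.ext (h1.2.symm.trans h2.2) he
    refine hsub.trans (card_image_le.trans ?_)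
    simp
  have hcount2 : ∀ p : Fin m × Fin n, ((Zset φ).filter fun q => p.2 = q.2).card ≤ d := by
    intro p
    rw [← hdeg p.2]
    apply card_le_card_of_injOn (fun q => q.1)
    · intro q hq
      rw [mem_coe, mem_filter] at hq
      obtain ⟨t, ht⟩ := (hmemZ q).1 hq.1
      rw [mem_coe, mem_filter]
      exact ⟨mem_univ _, t, by rw [ht, ← hq.2]⟩
    · intro q1 h1 q2 h2 he
      simp only [coe_filter, Set.mem_setOf_eq] at h1 h2
      exact Prod.ext he (h1.2.symm.trans h2.2)
  -- pointwise bound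
  have hpoint : ∀ p q : Fin m × Fin n,
      cA2 p.1 q.1 * cB2 p.2 q.2 - (a'*b')^2/(a*b)
        ≤ (if p = q then a'*b' else 0) + (if p.1 = q.1 then a'*(b'^2/b) else 0)
          + (if p.2 = q.2 then (a'^2/a)*b' else 0) := by
    intro p q
    have hnn : (0:ℝ) ≤ (a'*b')^2/(a*b) := div_nonneg (sq_nonneg _) (mul_pos hapos hbpos).le
    by_cases e1 : p.1 = q.1 <;> by_cases e2 : p.2 = q.2
    · have hpq : p = q := Prod.ext e1 e2
      subst hpq
      rw [if_pos rfl, if_pos rfl, if_pos rfl]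
      have m1 : cA2 p.1 p.1 * cB2 p.2 p.2 ≤ a'*b' :=
        mul_le_mul (hA2le _ _) (hB2le _ _) (hcB2nonneg _ _) ha'pos.le
      have p2 : (0:ℝ) ≤ a'*(b'^2/b) :=
        mul_nonneg ha'pos.le (div_nonneg (sq_nonneg _) hbpos.le)
      have p3 : (0:ℝ) ≤ (a'^2/a)*b' :=
        mul_nonneg (div_nonneg (sq_nonneg _) hapos.le) hb'pos.le
      linarith
    · have hpq : p ≠ q := fun h => e2 (by rw [h])
      rw [if_pos e1, if_neg e2, if_neg hpq]
      have m2 : cB2 p.2 q.2 ≤ b'^2/b := (le_div_iff₀ hbpos).2 (hB2mul _ _ e2)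
      have m1 : cA2 p.1 q.1 * cB2 p.2 q.2 ≤ a' * (b'^2/b) :=
        mul_le_mul (hA2le _ _) m2 (hcB2nonneg _ _) ha'pos.le
      linarith
    · have hpq : p ≠ q := fun h => e1 (by rw [h])
      rw [if_neg e1, if_pos e2, if_neg hpq]
      have m2 : cA2 p.1 q.1 ≤ a'^2/a := (le_div_iff₀ hapos).2 (hA2mul _ _ e1)
      have m1 : cA2 p.1 q.1 * cB2 p.2 q.2 ≤ (a'^2/a) * b' :=
        mul_le_mul m2 (hB2le _ _) (hcB2nonneg _ _) (div_nonneg (sq_nonneg _) hapos.le)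
      linarith
    · have hpq : p ≠ q := fun h => e1 (by rw [h])
      rw [if_neg e1, if_neg e2, if_neg hpq]
      have m2 : cA2 p.1 q.1 ≤ a'^2/a := (le_div_iff₀ hapos).2 (hA2mul _ _ e1)
      have m3 : cB2 p.2 q.2 ≤ b'^2/b := (le_div_iff₀ hbpos).2 (hB2mul _ _ e2)
      have m1 : cA2 p.1 q.1 * cB2 p.2 q.2 ≤ (a'^2/a)*(b'^2/b) :=
        mul_le_mul m2 m3 (hcB2nonneg _ _) (div_nonneg (sq_nonneg _) hapos.le)
      have e : (a'^2/a)*(b'^2/b) = (a'*b')^2/(a*b) := by ring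
      linarith
  -- summing the pointwise bound
  have hVbound : ∑ p ∈ Zset φ, ∑ q ∈ Zset φ,
      (cA2 p.1 q.1 * cB2 p.2 q.2 - (a'*b')^2/(a*b))
      ≤ z*(a'*b') + z*(3*(a'*(b'^2/b))) + z*((d:ℝ)*((a'^2/a)*b')) := by
    have split : ∑ p ∈ Zset φ, ∑ q ∈ Zset φ,
        (cA2 p.1 q.1 * cB2 p.2 q.2 - (a'*b')^2/(a*b))
        ≤ (∑ p ∈ Zset φ, ∑ q ∈ Zset φ, if p = q then a'*b' else 0)
          + ((∑ p ∈ Zset φ, ∑ q ∈ Zset φ, if p.1 = q.1 then a'*(b'^2/b) else 0)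
          + (∑ p ∈ Zset φ, ∑ q ∈ Zset φ, if p.2 = q.2 then (a'^2/a)*b' else 0)) := by
      rw [← sum_add_distrib, ← sum_add_distrib]
      refine sum_le_sum fun p _ => ?_
      rw [← sum_add_distrib, ← sum_add_distrib]
      refine sum_le_sum fun q _ => ?_
      have := hpoint p q
      linarith
    have E1 : (∑ p ∈ Zset φ, ∑ q ∈ Zset φ, if p = q then a'*b' else 0) = z*(a'*b') := by
      have inner : ∀ p ∈ Zset φ,
          (∑ q ∈ Zset φ, if p = q then a'*b' else 0) = a'*b' := by
        intro p hp
        rw [Finset.sum_ite_eq]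
        exact if_pos hp
      rw [sum_congr rfl inner, sum_const, nsmul_eq_mul, hzdef]
    have E2 : (∑ p ∈ Zset φ, ∑ q ∈ Zset φ, if p.1 = q.1 then a'*(b'^2/b) else 0)
        ≤ z*(3*(a'*(b'^2/b))) := by
      have C2nn : (0:ℝ) ≤ a'*(b'^2/b) :=
        mul_nonneg ha'pos.le (div_nonneg (sq_nonneg _) hbpos.le)
      have inner : ∀ p ∈ Zset φ,
          (∑ q ∈ Zset φ, if p.1 = q.1 then a'*(b'^2/b) else 0) ≤ 3*(a'*(b'^2/b)) := by
        intro p _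
        rw [sum_congr rfl fun q (_ : q ∈ Zset φ) =>
          (by split_ifs <;> ring :
            (if p.1 = q.1 then a'*(b'^2/b) else 0)
              = (if p.1 = q.1 then (1:ℝ) else 0) * (a'*(b'^2/b)))]
        rw [← sum_mul, Finset.sum_boole]
        refine mul_le_mul_of_nonneg_right ?_ C2nn
        exact_mod_cast hcount1 p
      calc _ ≤ ∑ _p ∈ Zset φ, 3*(a'*(b'^2/b)) := sum_le_sum inner
        _ = z*(3*(a'*(b'^2/b))) := by rw [sum_const, nsmul_eq_mul, hzdef]
    have E3 : (∑ p ∈ Zset φ, ∑ q ∈ Zset φ, if p.2 = q.2 then (a'^2/a)*b' else 0)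
        ≤ z*((d:ℝ)*((a'^2/a)*b')) := by
      have C3nn : (0:ℝ) ≤ (a'^2/a)*b' :=
        mul_nonneg (div_nonneg (sq_nonneg _) hapos.le) hb'pos.le
      have inner : ∀ p ∈ Zset φ,
          (∑ q ∈ Zset φ, if p.2 = q.2 then (a'^2/a)*b' else 0) ≤ (d:ℝ)*((a'^2/a)*b') := by
        intro p _
        rw [sum_congr rfl fun q (_ : q ∈ Zset φ) =>
          (by split_ifs <;> ring :
            (if p.2 = q.2 then (a'^2/a)*b' else 0)
              = (if p.2 = q.2 then (1:ℝ) else 0) * ((a'^2/a)*b'))]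
        rw [← sum_mul, Finset.sum_boole]
        refine mul_le_mul_of_nonneg_right ?_ C3nn
        exact_mod_cast hcount2 p
      calc _ ≤ ∑ _p ∈ Zset φ, (d:ℝ)*((a'^2/a)*b') := sum_le_sum inner
        _ = z*((d:ℝ)*((a'^2/a)*b')) := by rw [sum_const, nsmul_eq_mul, hzdef]
    linarith
  -- numeric inequality
  have hk' : (1:ℝ) ≤ (k:ℝ) := by exact_mod_cast hk
  have hl' : (1:ℝ) ≤ (ℓ:ℝ) := by exact_mod_cast hℓ
  have hkm' : (k:ℝ) ≤ (m:ℝ) := by exact_mod_cast hkm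
  have hln' : (ℓ:ℝ) ≤ (n:ℝ) := by exact_mod_cast hℓn
  have hd' : (1:ℝ) ≤ (d:ℝ) := by exact_mod_cast hd
  have hm' : (1:ℝ) ≤ (m:ℝ) := by exact_mod_cast hm
  have hn' : (1:ℝ) ≤ (n:ℝ) := by exact_mod_cast hn
  have hnum : (m:ℝ)*n + 3*((m:ℝ)*ℓ) + (d:ℝ)*((k:ℝ)*n) ≤ 12*((d:ℝ)+2)^2*((m:ℝ)*n) :=
    aux_num _ _ _ _ _ hd' hk' hl' hkm' hln'
  -- main algebraic bound
  have hV0 : a*b*(z*(a'*b') + z*(3*(a'*(b'^2/b))) + z*((d:ℝ)*((a'^2/a)*b')))*((k:ℝ)*ℓ)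
      ≤ 4*((d:ℝ)+2)^2*(n:ℝ)*(a'*b'*z)^2 := by
    have expand : a*b*(z*(a'*b') + z*(3*(a'*(b'^2/b))) + z*((d:ℝ)*((a'^2/a)*b')))*((k:ℝ)*ℓ)
        = (z*a'*b')*(((k:ℝ)*a)*((ℓ:ℝ)*b)) + (3*z*a'*b'^2*(ℓ:ℝ))*((k:ℝ)*a)
          + ((d:ℝ)*z*a'^2*b'*(k:ℝ))*((ℓ:ℝ)*b) := by
      field_simp
    rw [expand, ← h1, ← h2]
    have final_eq : (z*a'*b')*(((m:ℝ)*a')*((n:ℝ)*b')) + (3*z*a'*b'^2*(ℓ:ℝ))*((m:ℝ)*a')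
        + ((d:ℝ)*z*a'^2*b'*(k:ℝ))*((n:ℝ)*b')
        = z*(a'^2*b'^2)*((m:ℝ)*n + 3*((m:ℝ)*ℓ) + (d:ℝ)*((k:ℝ)*n)) := by ring
    rw [final_eq]
    calc z*(a'^2*b'^2)*((m:ℝ)*n + 3*((m:ℝ)*ℓ) + (d:ℝ)*((k:ℝ)*n))
        ≤ z*(a'^2*b'^2)*(12*((d:ℝ)+2)^2*((m:ℝ)*n)) := by
          refine mul_le_mul_of_nonneg_left hnum ?_
          exact mul_nonneg hzpos.le (mul_nonneg (sq_nonneg _) (sq_nonneg _))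
      _ = 4*((d:ℝ)+2)^2*(n:ℝ)*(a'*b'*z)^2 := by
          linear_combination (-(4*((d:ℝ)+2)^2*(n:ℝ)*a'^2*b'^2*z))*hz3
  -- conclude
  have hSnn : 0 ≤ S := by
    rw [hSdef]
    exact sum_nonneg fun I _ => sum_nonneg fun J _ => abs_nonneg _
  have hklpos : (0:ℝ) < (k:ℝ)*ℓ := mul_pos (by linarith) (by linarith)
  have hrn : (0:ℝ) ≤ (n:ℝ)/((k:ℝ)*ℓ) := div_nonneg (by linarith) hklpos.le
  have hV : ∑ I ∈ (univ : Finset (Fin m)).powersetCard k,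
      ∑ J ∈ (univ : Finset (Fin n)).powersetCard ℓ, (X I J - μ)^2
      ≤ z*(a'*b') + z*(3*(a'*(b'^2/b))) + z*((d:ℝ)*((a'^2/a)*b')) := by
    rw [hvar]; exact hVbound
  have hS2bound : S^2 ≤ a*b*(z*(a'*b') + z*(3*(a'*(b'^2/b))) + z*((d:ℝ)*((a'^2/a)*b'))) :=
    hCS.trans (mul_le_mul_of_nonneg_left hV (mul_pos hapos hbpos).le)
  have key2 : (1/2*(S/(a'*b'*z)))^2 ≤ (((d:ℝ)+2)*Real.sqrt ((n:ℝ)/((k:ℝ)*ℓ)))^2 := by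
    have rhs_eq : (((d:ℝ)+2)*Real.sqrt ((n:ℝ)/((k:ℝ)*ℓ)))^2
        = ((d:ℝ)+2)^2*((n:ℝ)/((k:ℝ)*ℓ)) := by
      rw [mul_pow, Real.sq_sqrt hrn]
    have e : (1/2*(S/(a'*b'*z)))^2 = S^2/(4*(a'*b'*z)^2) := by ring
    rw [rhs_eq, e, div_le_iff₀ (mul_pos (by norm_num : (0:ℝ) < 4) (pow_pos hcpos 2))]
    have hstep : a*b*(z*(a'*b') + z*(3*(a'*(b'^2/b))) + z*((d:ℝ)*((a'^2/a)*b')))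
        ≤ 4*((d:ℝ)+2)^2*(n:ℝ)*(a'*b'*z)^2/((k:ℝ)*ℓ) := by
      rw [le_div_iff₀ hklpos]
      exact hV0
    calc S^2 ≤ a*b*(z*(a'*b') + z*(3*(a'*(b'^2/b))) + z*((d:ℝ)*((a'^2/a)*b'))) := hS2bound
      _ ≤ 4*((d:ℝ)+2)^2*(n:ℝ)*(a'*b'*z)^2/((k:ℝ)*ℓ) := hstep
      _ = ((d:ℝ)+2)^2*((n:ℝ)/((k:ℝ)*ℓ))*(4*(a'*b'*z)^2) := by ring
  have hL : 0 ≤ 1/2*(S/(a'*b'*z)) := by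
    have : 0 ≤ S/(a'*b'*z) := div_nonneg hSnn hcpos.le
    linarith
  have hR : 0 ≤ ((d:ℝ)+2)*Real.sqrt ((n:ℝ)/((k:ℝ)*ℓ)) :=
    mul_nonneg (by linarith) (Real.sqrt_nonneg _)
  calc (1:ℝ)/2 * (S/(a'*b'*z)) = Real.sqrt ((1/2*(S/(a'*b'*z)))^2) := (Real.sqrt_sq hL).symm
    _ ≤ Real.sqrt ((((d:ℝ)+2)*Real.sqrt ((n:ℝ)/((k:ℝ)*ℓ)))^2) := Real.sqrt_le_sqrt key2
    _ = ((d:ℝ)+2)*Real.sqrt ((n:ℝ)/((k:ℝ)*ℓ)) := Real.sqrt_sq hR
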